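/- Let X be a {−1,+1}-valued random variable and let W be any observation of X on the same probability space. Then E[ h_b( (1 + E[X|W])/2 ) ] = Σ_{k=1}^{∞} c_k · ( 1 − E[ (E[X|W])^{2k} ] ), where c_k := 1/(ln(2)·2k·(2k−1)). In particular, taking W trivial, h_b((1+μ)/2) = Σ_{k=1}^{∞} c_k·(1 − μ^{2k}) for every μ ∈ [−1,1], and this series converges uniformly on [−1,1]. -/

import Mathlib

open MeasureTheory ProbabilityTheory

noncomputable section

/-- The binary entropy function (base 2). -/
def hb (p : ℝ) : ℝ := -(p * Real.logb 2 p) - (1 - p) * Real.logb 2 (1 - p)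

/-- Conditional expectation `E[X | W]` of `X` given the σ-algebra generated by `W`. -/
def condMean {Ω β E : Type*} [MeasurableSpace Ω] [MeasurableSpace β]
    [NormedAddCommGroup E] [NormedSpace ℝ E] [CompleteSpace E]
    (μ : Measure Ω) (X : Ω → E) (W : Ω → β) : Ω → E :=
  μ[X | MeasurableSpace.comap W inferInstance]

/-- Bit-error probability of the MAP decision rule for `X ∈ {±1}` given `W`. -/
def BER {Ω β : Type*} [MeasurableSpace Ω] [MeasurableSpace β]
    (μ : Measure Ω) (X : Ω → ℝ) (W : Ω → β) : ℝ :=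
  (1 - ∫ ω, |condMean μ X W ω| ∂μ) / 2

/-- Minimum mean squared error of estimating `X` from `W`. -/
def mmse {Ω β : Type*} [MeasurableSpace Ω] [MeasurableSpace β]
    (μ : Measure Ω) (X : Ω → ℝ) (W : Ω → β) : ℝ :=
  ∫ ω, (X ω - condMean μ X W ω) ^ 2 ∂μ

/-- Uniform distribution on `{-1, 1} ⊆ ℝ`. -/
def signMeasure : Measure ℝ := (2 : ENNReal)⁻¹ • (Measure.dirac (-1) + Measure.dirac 1)

/-- Capacity of the BMS channel (in multiplicative-noise form) with noise law `PZ`: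
`C = 1 - E[h_b((1 + E[X_u | Y_u])/2)]` where `X_u` is uniform on `{±1}`, independent of
`Z₀ ~ PZ`, and `Y_u = X_u · Z₀`. -/
def capacity (PZ : Measure ℝ) : ℝ :=
  1 - ∫ p, hb ((1 + condMean (signMeasure.prod PZ)
        (fun q : ℝ × ℝ => q.1) (fun q : ℝ × ℝ => q.1 * q.2) p) / 2) ∂(signMeasure.prod PZ)

/-- Evaluation vector of the multilinear polynomial whose coefficients on monomials
of degree at most `r` are given by `α` (higher-degree coefficients being ignored),
evaluated at the point `v ∈ 𝔽₂^m` with index `i = Σ_j v_j 2^j`. -/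
def RMword (r m : ℕ) (α : Finset (Fin m) → ZMod 2) : Fin (2 ^ m) → ZMod 2 :=
  fun i => ∑ S ∈ Finset.univ.filter (fun S : Finset (Fin m) => S.card ≤ r),
    α S * ∏ j ∈ S, ((((i : ℕ) / 2 ^ (j : ℕ)) % 2 : ℕ) : ZMod 2)

/-- The Reed–Muller code RM(r, m) ⊆ 𝔽₂^{2^m}. -/
def RMcode (r m : ℕ) : Finset (Fin (2 ^ m) → ZMod 2) :=
  Finset.image (RMword r m) Finset.univ

/-- The rate `R(r,m)` of RM(r,m). -/
def RMrate (r m : ℕ) : ℝ := (2 ^ m : ℝ)⁻¹ * ∑ i ∈ Finset.range (r + 1), (m.choose i : ℝ)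

/-- BPSK modulation map `c ↦ ((-1)^{c_0}, …, (-1)^{c_{N-1}})`. -/
def bpsk {N : ℕ} (c : Fin N → ZMod 2) : Fin N → ℝ := fun i => (-1 : ℝ) ^ ((c i).val)

/-- BPSK image of a binary code. -/
def bpskImage {N : ℕ} (C : Finset (Fin N → ZMod 2)) : Finset (Fin N → ℝ) :=
  letI := Classical.decEq (Fin N → ℝ)
  C.image bpsk

/-- BPSK image of RM(r,m). -/
def bpskRM (r m : ℕ) : Finset (Fin (2 ^ m) → ℝ) := bpskImage (RMcode r m)

/-- Uniform probability measure on a finite set. -/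
def uniformOnFinset {α : Type*} [MeasurableSpace α] (s : Finset α) : Measure α :=
  (s.card : ENNReal)⁻¹ • ∑ x ∈ s, Measure.dirac x

/-- `ρ(m) = (6 ln m + 34)/(5 √m)`. -/
def rho (m : ℕ) : ℝ := (6 * Real.log m + 34) / (5 * Real.sqrt m)

/-- Inverse of the binary entropy function restricted to `[0, 1/2]`. -/
def hbInv (u : ℝ) : ℝ := sSup {p : ℝ | p ∈ Set.Icc (0 : ℝ) (1 / 2) ∧ hb p ≤ u}

/-- `ψ(u) = 1 - (1 - 2 h_b^{-1}(u))²`. -/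
def psi (u : ℝ) : ℝ := 1 - (1 - 2 * hbInv u) ^ 2

/-- `Ψ(u) = ∫₀^u ψ(v) dv`. -/
def PsiInt (u : ℝ) : ℝ := ∫ v in (0 : ℝ)..u, psi v

/-- The coefficients `c_k = 1/(ln 2 · 2k (2k-1))`. -/
def ck (k : ℕ) : ℝ := 1 / (Real.log 2 * (2 * k) * (2 * k - 1))

/-- The channel moments `q_k = E[(E[X_u | Y_u])^{2k}]` for uniform input. -/
def qmom (PZ : Measure ℝ) (k : ℕ) : ℝ :=
  ∫ p, (condMean (signMeasure.prod PZ)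
      (fun q : ℝ × ℝ => q.1) (fun q : ℝ × ℝ => q.1 * q.2) p) ^ (2 * k) ∂(signMeasure.prod PZ)

end

section aux18

open Real Filter Topology

lemma aux18_summable : Summable (fun k : ℕ => 1 / (((2*k+1) : ℝ) * (2*k+2))) := by
  have h : Summable (fun k : ℕ => (1 : ℝ) / ((k:ℝ)+1)^2) := by
    have := (summable_nat_add_iff (f := fun n : ℕ => 1 / (n:ℝ)^2) 1).mpr
      (Real.summable_one_div_nat_pow.mpr one_lt_two)
    simpa using this
  refine Summable.of_nonneg_of_le (fun k => by positivity) (fun k => ?_) h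
  apply one_div_le_one_div_of_le (by positivity)
  nlinarith [sq_nonneg ((k:ℝ))]

lemma aux18_hasSum_F {t : ℝ} (ht : |t| < 1) :
    HasSum (fun k : ℕ => t^(2*k+2) / (((2*k+1) : ℝ) * (2*k+2)))
      (((1+t) * Real.log (1+t) + (1-t) * Real.log (1-t)) / 2) := by
  have ht' : |(-t)| < 1 := by rwa [abs_neg]
  have ht2 : |t^2| < 1 := by
    rw [abs_pow]
    calc |t|^2 ≤ |t| * 1 := by nlinarith [abs_nonneg t]
    _ < 1 := by simpa using ht
  -- odd part of the log series
  have h1 : HasSum (fun n : ℕ => ((t^(n+1) - (-t)^(n+1)) / (n+1)) / 2)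
      ((Real.log (1+t) - Real.log (1-t)) / 2) := by
    have := ((Real.hasSum_pow_div_log_of_abs_lt_one ht).sub
      (Real.hasSum_pow_div_log_of_abs_lt_one ht')).div_const 2
    have e : (1 : ℝ) - -t = 1 + t := by ring
    rw [e] at this
    rw [show (Real.log (1+t) - Real.log (1-t)) / 2 = (-Real.log (1-t) - -Real.log (1+t)) / 2 by ring]
    refine this.congr_fun fun n => ?_
    ring
  have hodd : HasSum (fun k : ℕ => t^(2*k+1) / (2*(k:ℝ)+1))
      ((Real.log (1+t) - Real.log (1-t)) / 2) := by
    have hinj : Function.Injective (fun k : ℕ => 2*k) := fun a b h => by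
      simp only [] at h; omega
    have hz : ∀ n ∉ Set.range (fun k : ℕ => 2*k),
        ((t^(n+1) - (-t)^(n+1)) / ((n:ℝ)+1)) / 2 = 0 := by
      intro n hn
      have hodd : Odd n := by
        rcases Nat.even_or_odd n with he | ho
        · obtain ⟨r, hr⟩ := he
          exact absurd ⟨r, show 2*r = n by omega⟩ hn
        · exact ho
      have : Even (n+1) := by
        rcases hodd with ⟨m, hm⟩; exact ⟨m+1, by omega⟩
      rw [this.neg_pow]
      simp
    have := (Function.Injective.hasSum_iff hinj hz).mpr h1
    refine this.congr_fun fun k => ?_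
    have hne : (-t)^(2*k+1) = -t^(2*k+1) := Odd.neg_pow ⟨k, by omega⟩ t
    show t^(2*k+1) / (2*(k:ℝ)+1) = (t^(2*k+1) - (-t)^(2*k+1)) / (((2*k : ℕ):ℝ)+1) / 2
    rw [hne]
    push_cast
    ring
  have heven : HasSum (fun k : ℕ => t^(2*k+2) / (2*(k:ℝ)+2))
      (-Real.log (1 - t^2) / 2) := by
    have := (Real.hasSum_pow_div_log_of_abs_lt_one ht2).div_const 2
    refine this.congr_fun fun k => ?_
    rw [show 2*k+2 = 2*(k+1) from by ring, pow_mul]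
    push_cast
    rw [div_div, show ((k:ℝ)+1)*2 = 2*(k:ℝ)+2 from by ring]
  have := (hodd.mul_left t).sub heven
  have hlog : Real.log (1 - t^2) = Real.log (1+t) + Real.log (1-t) := by
    rw [show (1:ℝ) - t^2 = (1+t)*(1-t) from by ring]
    exact Real.log_mul (by nlinarith [abs_lt.mp ht]) (by nlinarith [abs_lt.mp ht])
  rw [hlog] at this
  have hval : t * ((Real.log (1+t) - Real.log (1-t)) / 2)
      - (-(Real.log (1+t) + Real.log (1-t)) / 2)
      = ((1+t) * Real.log (1+t) + (1-t) * Real.log (1-t)) / 2 := by ring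
  rw [hval] at this
  refine this.congr_fun fun k => ?_
  have h1 : (2*(k:ℝ)+1) ≠ 0 := by positivity
  have h2 : (2*(k:ℝ)+2) ≠ 0 := by positivity
  field_simp
  ring

lemma aux18_hasSum_log2 :
    HasSum (fun k : ℕ => 1 / (((2*k+1) : ℝ) * (2*k+2))) (Real.log 2) := by
  set F : ℝ → ℝ := fun t => ∑' k : ℕ, t^(2*k+2) / (((2*k+1) : ℝ) * (2*k+2)) with hF
  have hbd : ∀ (k : ℕ) (t : ℝ), t ∈ Set.Icc (-1:ℝ) 1 →
      ‖t^(2*k+2) / (((2*k+1) : ℝ) * (2*k+2))‖ ≤ 1 / (((2*k+1) : ℝ) * (2*k+2)) := by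
    intro k t ht
    have h1 : |t| ≤ 1 := abs_le.mpr ⟨ht.1, ht.2⟩
    rw [norm_div, Real.norm_eq_abs, Real.norm_eq_abs, abs_pow]
    have h2 : |t|^(2*k+2) ≤ 1 := pow_le_one₀ (abs_nonneg t) h1
    have hpos : (0:ℝ) < ((2*k+1) : ℝ) * (2*k+2) := by positivity
    rw [abs_of_pos hpos]
    gcongr
  have huc : TendstoUniformlyOn
      (fun N t => ∑ k ∈ Finset.range N, t^(2*k+2) / (((2*k+1) : ℝ) * (2*k+2)))
      F atTop (Set.Icc (-1:ℝ) 1) :=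
    tendstoUniformlyOn_tsum_nat aux18_summable hbd
  have hcont : ContinuousOn F (Set.Icc (-1:ℝ) 1) := by
    apply huc.continuousOn
    refine Filter.Frequently.of_forall fun N => ?_
    exact (continuous_finset_sum _ fun k _ => by continuity).continuousOn
  have hmem : (1:ℝ) ∈ Set.Icc (-1:ℝ) 1 := by norm_num
  have hne : (𝓝[Set.Ioo (0:ℝ) 1] 1).NeBot := by
    apply mem_closure_iff_nhdsWithin_neBot.mp
    rw [closure_Ioo (by norm_num : (0:ℝ) ≠ 1)]
    norm_num
  have hle : 𝓝[Set.Ioo (0:ℝ) 1] (1:ℝ) ≤ 𝓝[Set.Icc (-1:ℝ) 1] 1 :=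
    nhdsWithin_mono _ (fun x hx => ⟨by linarith [hx.1], hx.2.le⟩)
  have hT1 : Tendsto F (𝓝[Set.Ioo (0:ℝ) 1] 1) (𝓝 (F 1)) :=
    ((hcont 1 hmem).tendsto).mono_left hle
  have hT2 : Tendsto F (𝓝[Set.Ioo (0:ℝ) 1] 1) (𝓝 (Real.log 2)) := by
    have hG : Tendsto (fun t : ℝ => ((1+t) * Real.log (1+t) + (1-t) * Real.log (1-t)) / 2)
        (𝓝[Set.Ioo (0:ℝ) 1] 1) (𝓝 (Real.log 2)) := by
      have c1 : ContinuousAt (fun t : ℝ => (1+t) * Real.log (1+t)) 1 := by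
        exact (continuous_const.add continuous_id).continuousAt.mul
          ((Real.continuousAt_log (by norm_num)).comp
            (continuous_const.add continuous_id).continuousAt)
      have c2 : Continuous (fun t : ℝ => Real.negMulLog (1-t)) :=
        Real.continuous_negMulLog.comp (continuous_const.sub continuous_id)
      have key : ∀ t : ℝ, ((1+t) * Real.log (1+t) + (1-t) * Real.log (1-t)) / 2
          = ((1+t) * Real.log (1+t) - Real.negMulLog (1-t)) / 2 := by
        intro t; rw [Real.negMulLog]; ring
      have : Tendsto (fun t : ℝ => ((1+t) * Real.log (1+t) - Real.negMulLog (1-t)) / 2)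
          (𝓝 (1:ℝ)) (𝓝 (((1+1) * Real.log (1+1) - Real.negMulLog (1-1)) / 2)) := by
        exact ((c1.sub (c2.continuousAt)).div_const 2)
      have hval : ((1+1) * Real.log (1+1) - Real.negMulLog ((1:ℝ)-1)) / 2 = Real.log 2 := by
        norm_num [Real.negMulLog]
      rw [hval] at this
      refine (this.mono_left nhdsWithin_le_nhds).congr fun t => (key t).symm
    refine hG.congr' ?_
    filter_upwards [self_mem_nhdsWithin] with t ht
    exact ((aux18_hasSum_F (by rw [abs_lt]; exact ⟨by linarith [ht.1], ht.2⟩)).tsum_eq).symm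
  have hF1 : F 1 = Real.log 2 := tendsto_nhds_unique hT1 hT2
  have : (∑' k : ℕ, 1 / (((2*k+1) : ℝ) * (2*k+2))) = Real.log 2 := by
    rw [← hF1, hF]
    simp
  exact this ▸ aux18_summable.hasSum

lemma aux18_ck_eq (k : ℕ) :
    ck (k+1) = (1 / Real.log 2) * (1 / (((2*k+1) : ℝ) * (2*k+2))) := by
  rw [ck]
  push_cast
  rw [one_div_mul_one_div]
  congr 1
  ring

lemma aux18_hasSum_ck : HasSum (fun k : ℕ => ck (k+1)) 1 := by
  have hlog2 : Real.log 2 ≠ 0 := ne_of_gt (Real.log_pos one_lt_two)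
  have := aux18_hasSum_log2.mul_left (1 / Real.log 2)
  rw [one_div_mul_cancel hlog2] at this
  exact this.congr_fun fun k => aux18_ck_eq k

lemma aux18_hasSum_hb {t : ℝ} (ht : t ∈ Set.Icc (-1:ℝ) 1) :
    HasSum (fun k : ℕ => ck (k+1) * (1 - t^(2*(k+1)))) (hb ((1+t)/2)) := by
  rcases eq_or_lt_of_le ht.2 with h1 | h1
  · have hf : (fun k : ℕ => ck (k+1) * (1 - t^(2*(k+1)))) = fun _ => (0:ℝ) := by
      funext k; rw [h1]; simp
    have hv : hb ((1+t)/2) = 0 := by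
      rw [h1]; norm_num [hb]
    rw [hf, hv]; exact hasSum_zero
  rcases eq_or_lt_of_le ht.1 with h2 | h2
  · have hf : (fun k : ℕ => ck (k+1) * (1 - t^(2*(k+1)))) = fun _ => (0:ℝ) := by
      funext k
      rw [← h2, show (-1:ℝ)^(2*(k+1)) = 1 from (Even.neg_one_pow ⟨k+1, by ring⟩)]
      simp
    have hv : hb ((1+t)/2) = 0 := by
      rw [← h2]; norm_num [hb]
    rw [hf, hv]; exact hasSum_zero
  · have habs : |t| < 1 := abs_lt.mpr ⟨h2, h1⟩
    have hlog2 : Real.log 2 ≠ 0 := ne_of_gt (Real.log_pos one_lt_two)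
    have hsum2 := (aux18_hasSum_F habs).mul_left (1 / Real.log 2)
    have h := aux18_hasSum_ck.sub hsum2
    have hp1 : (0:ℝ) < 1 + t := by linarith
    have hp2 : (0:ℝ) < 1 - t := by linarith
    have hval : hb ((1+t)/2)
        = 1 - (1/Real.log 2) * (((1+t) * Real.log (1+t) + (1-t) * Real.log (1-t)) / 2) := by
      rw [hb, Real.logb, Real.logb, show (1 : ℝ) - (1+t)/2 = (1-t)/2 from by ring,
          Real.log_div (ne_of_gt hp1) two_ne_zero, Real.log_div (ne_of_gt hp2) two_ne_zero]
      field_simp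
      ring
    rw [hval]
    refine h.congr_fun fun k => ?_
    rw [aux18_ck_eq]
    rw [show 2*(k+1) = 2*k+2 from by ring]
    push_cast
    ring

end aux18

/-- series expansion of conditional entropy:
`E[h_b((1+E[X|W])/2)] = Σ_{k≥1} c_k (1 − E[(E[X|W])^{2k}])`; in particular
`h_b((1+μ)/2) = Σ_{k≥1} c_k (1 − μ^{2k})` for `μ ∈ [−1,1]`, with uniform convergence
of the partial sums on `[−1,1]`. -/
theorem stmt_18 {Ω β : Type*} [MeasurableSpace Ω] [MeasurableSpace β]
    (μ : Measure Ω) [IsProbabilityMeasure μ]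
    (X : Ω → ℝ) (hX : Measurable X) (hpm : ∀ ω, X ω = -1 ∨ X ω = 1)
    (W : Ω → β) (hW : Measurable W) :
    (∫ ω, hb ((1 + condMean μ X W ω) / 2) ∂μ
        = ∑' k : ℕ, ck (k + 1) * (1 - ∫ ω, (condMean μ X W ω) ^ (2 * (k + 1)) ∂μ))
    ∧ (∀ t ∈ Set.Icc (-1 : ℝ) 1,
        hb ((1 + t) / 2) = ∑' k : ℕ, ck (k + 1) * (1 - t ^ (2 * (k + 1))))
    ∧ TendstoUniformlyOn
        (fun n t => ∑ k ∈ Finset.range n, ck (k + 1) * (1 - t ^ (2 * (k + 1))))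
        (fun t => hb ((1 + t) / 2)) Filter.atTop (Set.Icc (-1 : ℝ) 1) := by
  have hpt : ∀ t ∈ Set.Icc (-1:ℝ) 1,
      hb ((1+t)/2) = ∑' k : ℕ, ck (k+1) * (1 - t^(2*(k+1))) :=
    fun t ht => ((aux18_hasSum_hb ht).tsum_eq).symm
  have hck_nonneg : ∀ k : ℕ, 0 ≤ ck (k+1) := by
    intro k
    rw [aux18_ck_eq]
    have := Real.log_pos (by norm_num : (1:ℝ) < 2)
    positivity
  have hck_summable : Summable (fun k : ℕ => ck (k+1)) := aux18_hasSum_ck.summable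
  have hXbd : ∀ x : ℝ, |x| ≤ 1 → ∀ k : ℕ, |1 - x^(2*(k+1))| ≤ 2 := by
    intro x hx k
    have hX0 : 0 ≤ x^(2*(k+1)) := by rw [pow_mul]; positivity
    have hX1 : x^(2*(k+1)) ≤ 1 := by
      rw [pow_mul]
      refine pow_le_one₀ (sq_nonneg x) ?_
      nlinarith [abs_le.mp hx]
    rw [abs_le]
    constructor <;> linarith
  have hbound : ∀ (k : ℕ) (t : ℝ), t ∈ Set.Icc (-1:ℝ) 1 →
      ‖ck (k+1) * (1 - t^(2*(k+1)))‖ ≤ ck (k+1) * 2 := by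
    intro k t ht
    rw [norm_mul, Real.norm_eq_abs, Real.norm_eq_abs, abs_of_nonneg (hck_nonneg k)]
    exact mul_le_mul_of_nonneg_left (hXbd t (abs_le.mpr ⟨ht.1, ht.2⟩) k) (hck_nonneg k)
  have huc := tendstoUniformlyOn_tsum_nat (hck_summable.mul_right 2) hbound
  refine ⟨?_, hpt, huc.congr_right fun t ht => (hpt t ht).symm⟩
  -- integral part
  have hm : MeasurableSpace.comap W inferInstance ≤ (inferInstance : MeasurableSpace Ω) :=
    hW.comap_le
  have hMsm : StronglyMeasurable (condMean μ X W) :=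
    (stronglyMeasurable_condExp (f := X)
      (m := MeasurableSpace.comap W inferInstance) (μ := μ)).mono hm
  have hMmeas : Measurable (condMean μ X W) := hMsm.measurable
  set M : Ω → ℝ := condMean μ X W with hM_def
  have hMbd : ∀ᵐ ω ∂μ, |M ω| ≤ 1 := by
    have h1 : ∀ᵐ ω ∂μ, |X ω| ≤ ((1:NNReal) : ℝ) := by
      filter_upwards with ω
      rcases hpm ω with h | h <;> simp [h]
    simpa [hM_def, condMean] using ae_bdd_condExp_of_ae_bdd
      (m := MeasurableSpace.comap W inferInstance) h1
  have hint : ∀ k : ℕ, Integrable (fun ω => M ω ^ (2*(k+1))) μ := by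
    intro k
    refine Integrable.mono' (integrable_const (1:ℝ))
      ((hMmeas.pow_const _).aestronglyMeasurable) ?_
    filter_upwards [hMbd] with ω hω
    rw [Real.norm_eq_abs, abs_pow]
    exact pow_le_one₀ (abs_nonneg _) hω
  have hFk_int : ∀ k : ℕ, Integrable (fun ω => ck (k+1) * (1 - M ω ^ (2*(k+1)))) μ :=
    fun k => (((integrable_const (1:ℝ)).sub (hint k)).const_mul _)
  have hnorm_le : ∀ k : ℕ,
      (∫ ω, ‖ck (k+1) * (1 - M ω ^ (2*(k+1)))‖ ∂μ) ≤ ck (k+1) * 2 := by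
    intro k
    calc (∫ ω, ‖ck (k+1) * (1 - M ω ^ (2*(k+1)))‖ ∂μ)
        ≤ ∫ _, ck (k+1) * 2 ∂μ := by
          refine integral_mono_ae (hFk_int k).norm (integrable_const _) ?_
          filter_upwards [hMbd] with ω hω
          rw [norm_mul, Real.norm_eq_abs, Real.norm_eq_abs, abs_of_nonneg (hck_nonneg k)]
          exact mul_le_mul_of_nonneg_left (hXbd (M ω) hω k) (hck_nonneg k)
      _ = ck (k+1) * 2 := by simp [measure_univ]
  have hsum_int : Summable (fun k : ℕ => ∫ ω, ‖ck (k+1) * (1 - M ω ^ (2*(k+1)))‖ ∂μ) :=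
    Summable.of_nonneg_of_le (fun k => integral_nonneg fun ω => norm_nonneg _)
      hnorm_le (hck_summable.mul_right 2)
  have hswap := MeasureTheory.integral_tsum_of_summable_integral_norm hFk_int hsum_int
  have e1 : (∫ ω, hb ((1 + M ω)/2) ∂μ)
      = ∫ ω, ∑' k : ℕ, ck (k+1) * (1 - M ω ^ (2*(k+1))) ∂μ := by
    refine integral_congr_ae ?_
    filter_upwards [hMbd] with ω hω
    exact hpt (M ω) ⟨(abs_le.mp hω).1, (abs_le.mp hω).2⟩
  rw [e1, ← hswap]
  refine tsum_congr fun k => ?_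
  rw [integral_const_mul, integral_sub (integrable_const 1) (hint k)]
  simp [measure_univ]
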